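/- For all nonnegative integers i_1,...,i_r with ∑ i_j ≥ 1, the p-adic valuation satisfies ν_p((∑ i_j)!/(i_1!···i_r!)) − ν_p(∑ i_j) ≥ − min_{j : i_j > 0} ν_p(i_j). -/

import Mathlib

open Finset
open Nat

theorem val_multinomial_lower {p : ℕ} (hp : p.Prime) {r : ℕ} (I : Fin r → ℕ)
    (h : 1 ≤ ∑ j, I j) :
    ∀ j, 0 < I j →
      (padicValNat p (Nat.multinomial Finset.univ I) : ℤ) -
          padicValNat p (∑ j, I j) ≥ -(padicValNat p (I j) : ℤ) := by
  haveI := Fact.mk hp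
  intro j hj
  set n := ∑ j, I j with hn
  set I' := Function.update I j (I j - 1) with hI'
  have hsum' : ∑ k, I' k = n - 1 := by
    have h1 : ∑ k, I' k = I' j + ∑ k ∈ univ.erase j, I' k :=
      (Finset.add_sum_erase univ I' (mem_univ j)).symm
    have h2 : n = I j + ∑ k ∈ univ.erase j, I k :=
      (Finset.add_sum_erase univ I (mem_univ j)).symm
    have h3 : ∑ k ∈ univ.erase j, I' k = ∑ k ∈ univ.erase j, I k := by
      apply Finset.sum_congr rfl
      intro x hx
      simp [hI', Function.update_of_ne (Finset.ne_of_mem_erase hx)]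
    have h4 : I' j = I j - 1 := by simp [hI']
    omega
  have hprod : ∏ i, (I i)! = I j * ∏ i, (I' i)! := by
    rw [← Finset.mul_prod_erase univ (fun i => (I i)!) (mem_univ j),
        ← Finset.mul_prod_erase univ (fun i => (I' i)!) (mem_univ j)]
    have h3 : ∏ k ∈ univ.erase j, (I' k)! = ∏ k ∈ univ.erase j, (I k)! := by
      apply Finset.prod_congr rfl
      intro x hx
      simp [hI', Function.update_of_ne (Finset.ne_of_mem_erase hx)]
    have h4 : I' j = I j - 1 := by simp [hI']
    rw [h3, h4, ← mul_assoc, Nat.mul_factorial_pred hj.ne']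
  have key : Nat.multinomial univ I * I j = n * Nat.multinomial univ I' := by
    have hpos : 0 < ∏ i, (I' i)! := Finset.prod_pos fun i _ => (I' i).factorial_pos
    apply Nat.eq_of_mul_eq_mul_left hpos
    have s1 := Nat.multinomial_spec univ I
    have s2 := Nat.multinomial_spec univ I'
    rw [hsum'] at s2
    calc (∏ i, (I' i)!) * (Nat.multinomial univ I * I j)
        = (∏ i, (I i)!) * Nat.multinomial univ I := by rw [hprod]; ring
      _ = n ! := s1
      _ = n * (n - 1)! := (Nat.mul_factorial_pred (Nat.one_le_iff_ne_zero.mp h)).symm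
      _ = n * ((∏ i, (I' i)!) * Nat.multinomial univ I') := by rw [s2]
      _ = (∏ i, (I' i)!) * (n * Nat.multinomial univ I') := by ring
  have hm : Nat.multinomial univ I ≠ 0 := (Nat.multinomial_pos _ _).ne'
  have hm' : Nat.multinomial univ I' ≠ 0 := (Nat.multinomial_pos _ _).ne'
  have hv := congrArg (padicValNat p) key
  rw [padicValNat.mul hm hj.ne', padicValNat.mul (by omega) hm'] at hv
  have : padicValNat p n ≤ padicValNat p (Nat.multinomial univ I) + padicValNat p (I j) := by
    omega
  omega
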